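/- Under the full setup, the exponent h_1 in Φ_{ℓ^3}(q_4) = ℓ·q_1^{h_1} satisfies h_1 ≥ ℓ. -/

import Mathlib

open Finset

noncomputable def Phi (d : ℕ) (x : ℤ) : ℤ := (Polynomial.cyclotomic d ℤ).eval x


lemma Phi_prime_eval (p : ℕ) (hp : p.Prime) (x : ℤ) :
    Phi p x = ∑ i ∈ Finset.range p, x ^ i := by
  haveI : Fact p.Prime := ⟨hp⟩
  simp [Phi, Polynomial.cyclotomic_prime, Polynomial.eval_finset_sum]

lemma Phi_prime_pow_eval (p : ℕ) (hp : p.Prime) (n : ℕ) (x : ℤ) :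
    Phi (p ^ (n + 1)) x = ∑ i ∈ Finset.range p, (x ^ p ^ n) ^ i := by
  simp [Phi, Polynomial.cyclotomic_prime_pow_eq_geom_sum hp, Polynomial.eval_finset_sum]

theorem h1_ge_ell
    (N p α s : ℕ) (q β : Fin s → ℕ)
    (hN : N = p ^ α * ∏ i, q i ^ (2 * β i))
    (hodd : Odd N)
    (hperf : ArithmeticFunction.sigma 1 N = 2 * N)
    (hp : p.Prime) (hpodd : Odd p)
    (hq : ∀ i, (q i).Prime) (hqodd : ∀ i, Odd (q i))
    (hinj : Function.Injective q)
    (hpq : ∀ i, p ≠ q i)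
    (hα4 : α % 4 = 1) (hp4 : p % 4 = 1)
    (hαpos : 0 < α) (hβpos : ∀ i, 0 < β i)
    (hk : ∀ i, p ^ 2 ∣ 2 * β i + 1)
    (hnd : ¬ p ^ 10 ∣ N)
    (i₁ i₂ i₃ i₄ : Fin s)
    (hij : i₁ ≠ i₂ ∧ i₁ ≠ i₃ ∧ i₁ ≠ i₄ ∧ i₂ ≠ i₃ ∧ i₂ ≠ i₄ ∧ i₃ ≠ i₄)
    (hS : ∀ i, q i ≡ 1 [MOD p] ↔ i ∈ ({i₁, i₂, i₃, i₄} : Finset (Fin s)))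
    (hβ1 : 2 * β i₁ + 1 = p ^ 2) (hβ2 : 2 * β i₂ + 1 = p ^ 2)
    (hβ3 : 2 * β i₃ + 1 = p ^ 2) (hβ4 : 2 * β i₄ + 1 = p ^ 3)
    (h₁ : ℕ) (hh₁ : 0 < h₁)
    (hΦ3 : Phi (p ^ 3) (q i₄) = p * (q i₁ : ℤ) ^ h₁)
    (hΦ12 : ∃ h₂ h₃ : ℕ, 0 < h₂ ∧ 0 < h₃ ∧
      ((Phi p (q i₄) = p * (q i₂ : ℤ) ^ h₂ ∧ Phi (p ^ 2) (q i₄) = p * (q i₃ : ℤ) ^ h₃) ∨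
       (Phi p (q i₄) = p * (q i₃ : ℤ) ^ h₃ ∧ Phi (p ^ 2) (q i₄) = p * (q i₂ : ℤ) ^ h₂)))
    (e₂ e₃ e₄ : ℕ) (he₂ : 0 < e₂) (he₃ : 0 < e₃) (he₄ : 0 < e₄) (hℓe₄ : p ∣ e₄)
    (hA : Phi p (q i₁) = p * (q i₃ : ℤ) ^ e₃)
    (hB : Phi (p ^ 2) (q i₁) = p * (q i₂ : ℤ) ^ e₂ * (q i₄ : ℤ) ^ e₄)
    (f₁ : ℕ) (hf₁ : 0 < f₁)
    (hC : Phi p (q i₂) = p * (q i₁ : ℤ) ^ f₁)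
    :
    p ≤ h₁ := by
  obtain ⟨h₂, h₃, hh₂, hh₃, hcase⟩ := hΦ12
  have hq3 := hq i₃
  haveI : Fact (q i₃).Prime := ⟨hq3⟩
  set K := ZMod (q i₃) with hK
  have hq3z : ((q i₃ : ℕ) : K) = 0 := ZMod.natCast_self (q i₃)
  have hq3p : ¬ (q i₃ : ℕ) ∣ p := by
    intro hdvd
    rcases hp.eq_one_or_self_of_dvd _ hdvd with h | h
    · exact hq3.one_lt.ne' h
    · exact hpq i₃ h.symm
  have hpK : (p : K) ≠ 0 := by
    rw [Ne, ZMod.natCast_eq_zero_iff]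
    exact hq3p
  set x : K := ((q i₁ : ℕ) : K) with hx
  set y : K := ((q i₄ : ℕ) : K) with hy
  -- From hA: geometric sum of x vanishes, hence x^p = 1
  have hAK : ∑ i ∈ Finset.range p, x ^ i = 0 := by
    have h := congrArg (fun z : ℤ => (z : K)) hA
    rw [Phi_prime_eval p hp] at h
    push_cast +zetaDelta at h
    rw [h, hq3z, zero_pow he₃.ne', mul_zero]
  have hxp : x ^ p = 1 := by
    have h := geom_sum_mul x p
    rw [hAK, zero_mul] at h
    exact sub_eq_zero.mp h.symm
  -- From hΦ12: y ^ (p^2) = 1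
  have hyp2 : y ^ p ^ 2 = 1 := by
    rcases hcase with ⟨h12, h13⟩ | ⟨h13, h12⟩
    · -- Phi (p^2) (q i₄) = p * q₃ ^ h₃
      have h := congrArg (fun z : ℤ => (z : K)) h13
      rw [show (p:ℕ)^2 = p^(1+1) by ring, Phi_prime_pow_eval p hp 1 (q i₄)] at h
      push_cast +zetaDelta at h
      rw [hq3z, zero_pow hh₃.ne', mul_zero] at h
      have hg := geom_sum_mul ((y : K) ^ p ^ 1) p
      rw [show (∑ i ∈ Finset.range p, ((q i₄ : K) ^ p ^ 1) ^ i) = (0:K) from h] at hg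
      rw [zero_mul] at hg
      have : (y ^ p ^ 1) ^ p = 1 := sub_eq_zero.mp hg.symm
      rw [← pow_mul] at this
      rw [show (p:ℕ)^2 = p^1 * p by ring]
      exact this
    · -- Phi p (q i₄) = p * q₃ ^ h₃
      have h := congrArg (fun z : ℤ => (z : K)) h13
      rw [Phi_prime_eval p hp] at h
      push_cast +zetaDelta at h
      rw [hq3z, zero_pow hh₃.ne', mul_zero] at h
      have hg := geom_sum_mul (y : K) p
      rw [show (∑ i ∈ Finset.range p, (q i₄ : K) ^ i) = (0:K) from h, zero_mul] at hg
      have hyp : y ^ p = 1 := sub_eq_zero.mp hg.symm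
      rw [pow_two, pow_mul, hyp, one_pow]
  -- From hΦ3: p = p * x ^ h₁ in K
  have hmain : (p : K) = (p : K) * x ^ h₁ := by
    have h := congrArg (fun z : ℤ => (z : K)) hΦ3
    rw [show (p:ℕ)^3 = p^(2+1) by ring, Phi_prime_pow_eval p hp 2 (q i₄)] at h
    push_cast +zetaDelta at h
    rw [show ((q i₄ : K)) ^ p ^ 2 = 1 from hyp2] at h
    simpa using h
  have hxh : x ^ h₁ = 1 := by
    have := mul_left_cancel₀ hpK (by rw [mul_one]; exact hmain : (p : K) * 1 = (p : K) * x ^ h₁)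
    exact this.symm
  -- order argument
  have hd1 : orderOf x ∣ p := orderOf_dvd_of_pow_eq_one hxp
  have hd2 : orderOf x ∣ h₁ := orderOf_dvd_of_pow_eq_one hxh
  rcases hp.eq_one_or_self_of_dvd _ hd1 with ho | ho
  · -- orderOf x = 1, so x = 1, contradiction with hAK
    have hx1 : x = 1 := orderOf_eq_one_iff.mp ho
    rw [hx1] at hAK
    simp at hAK
    exact absurd hAK hpK
  · rw [ho] at hd2
    exact Nat.le_of_dvd hh₁ hd2
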